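/- With Ω = [[Ω₁, Γ],[Γ†, Ω₂]] and H₁c, H₂c as in the system reconstruction theorem, the subspace H₁c ⊕ H₂c is invariant under Ω and contains the range of the off-diagonal operator Γ̊ = [[0, Γ],[Γ†, 0]]. -/

import Mathlib

open ContinuousLinearMap MeasureTheory
set_option linter.unusedSectionVars false

/-- The orbit of a set `S` under an operator `Ω`: the smallest closed `Ω`-invariant
subspace containing `S`. -/
noncomputable def orbit {H : Type*} [NormedAddCommGroup H] [InnerProductSpace ℂ H]
    (Ω : H →L[ℂ] H) (S : Set H) : Submodule ℂ H :=
  sInf {K : Submodule ℂ H | S ⊆ K ∧ IsClosed (K : Set H) ∧ ∀ x ∈ K, Ω x ∈ K}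

variable {H₁ H₂ : Type*} [NormedAddCommGroup H₁] [InnerProductSpace ℂ H₁] [CompleteSpace H₁]
  [NormedAddCommGroup H₂] [InnerProductSpace ℂ H₂] [CompleteSpace H₂]

/-- Inclusion of `H₁` into the Hilbert space direct sum `H₁ ⊕ H₂`. -/
noncomputable def inl' : H₁ →L[ℂ] WithLp 2 (H₁ × H₂) :=
  (WithLp.prodContinuousLinearEquiv 2 ℂ H₁ H₂).symm.toContinuousLinearMap ∘L
    ContinuousLinearMap.inl ℂ H₁ H₂

/-- Inclusion of `H₂` into the Hilbert space direct sum `H₁ ⊕ H₂`. -/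
noncomputable def inr' : H₂ →L[ℂ] WithLp 2 (H₁ × H₂) :=
  (WithLp.prodContinuousLinearEquiv 2 ℂ H₁ H₂).symm.toContinuousLinearMap ∘L
    ContinuousLinearMap.inr ℂ H₁ H₂

/-- The block operator `[[Ω₁, Γ], [Γ†, Ω₂]]` on `H₁ ⊕ H₂`. -/
noncomputable def blockOp (Ω₁ : H₁ →L[ℂ] H₁) (Ω₂ : H₂ →L[ℂ] H₂) (Γ : H₂ →L[ℂ] H₁) :
    WithLp 2 (H₁ × H₂) →L[ℂ] WithLp 2 (H₁ × H₂) :=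
  (WithLp.prodContinuousLinearEquiv 2 ℂ H₁ H₂).symm.toContinuousLinearMap ∘L
    ((Ω₁ ∘L ContinuousLinearMap.fst ℂ H₁ H₂ + Γ ∘L ContinuousLinearMap.snd ℂ H₁ H₂).prod
      ((ContinuousLinearMap.adjoint Γ) ∘L ContinuousLinearMap.fst ℂ H₁ H₂ +
        Ω₂ ∘L ContinuousLinearMap.snd ℂ H₁ H₂)) ∘L
    (WithLp.prodContinuousLinearEquiv 2 ℂ H₁ H₂).toContinuousLinearMap

/-- `H₁` as a subspace of `H₁ ⊕ H₂`. -/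
noncomputable def sub1 : Submodule ℂ (WithLp 2 (H₁ × H₂)) := LinearMap.range ((inl' : H₁ →L[ℂ] WithLp 2 (H₁ × H₂)) : H₁ →ₗ[ℂ] _)

/-- `H₂` as a subspace of `H₁ ⊕ H₂`. -/
noncomputable def sub2 : Submodule ℂ (WithLp 2 (H₁ × H₂)) := LinearMap.range ((inr' : H₂ →L[ℂ] WithLp 2 (H₁ × H₂)) : H₂ →ₗ[ℂ] _)


section Aux

variable {H₁ H₂ : Type*} [NormedAddCommGroup H₁] [InnerProductSpace ℂ H₁] [CompleteSpace H₁]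
  [NormedAddCommGroup H₂] [InnerProductSpace ℂ H₂] [CompleteSpace H₂]

lemma subset_orbit' {H : Type*} [NormedAddCommGroup H] [InnerProductSpace ℂ H]
    (Ω : H →L[ℂ] H) (S : Set H) {x : H} (hx : x ∈ S) : x ∈ orbit Ω S := by
  rw [orbit, Submodule.mem_sInf]
  exact fun K hK => hK.1 hx

lemma orbit_mapsTo' {H : Type*} [NormedAddCommGroup H] [InnerProductSpace ℂ H]
    (Ω : H →L[ℂ] H) (S : Set H) {x : H} (hx : x ∈ orbit Ω S) : Ω x ∈ orbit Ω S := by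
  rw [orbit, Submodule.mem_sInf] at hx ⊢
  exact fun K hK => hK.2.2 x (hx K hK)

lemma mem_orbit_of_mem {H : Type*} [NormedAddCommGroup H] [InnerProductSpace ℂ H]
    (Ω : H →L[ℂ] H) (K : Submodule ℂ H) {x : H} (hx : x ∈ K) : x ∈ orbit Ω (K : Set H) :=
  subset_orbit' Ω (K : Set H) hx

/-- Auxiliary: the element `(a, b)` of `H₁ ⊕ H₂`. -/
noncomputable def pair (a : H₁) (b : H₂) : WithLp 2 (H₁ × H₂) :=
  (WithLp.equiv 2 (H₁ × H₂)).symm (a, b)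

lemma pair_add (a c : H₁) (b d : H₂) : pair a b + pair c d = pair (a + c) (b + d) := rfl

lemma pair_sub (a c : H₁) (b d : H₂) : pair a b - pair c d = pair (a - c) (b - d) := rfl

lemma pair_eq_self (p : WithLp 2 (H₁ × H₂)) : pair p.fst p.snd = p := rfl

lemma inl'_eq (x : H₁) : (inl' x : WithLp 2 (H₁ × H₂)) = pair x 0 := rfl

lemma inr'_eq (y : H₂) : (inr' y : WithLp 2 (H₁ × H₂)) = pair 0 y := rfl

lemma blockOp_pair (Ω₁ : H₁ →L[ℂ] H₁) (Ω₂ : H₂ →L[ℂ] H₂) (Γ : H₂ →L[ℂ] H₁) (a : H₁) (b : H₂) :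
    blockOp Ω₁ Ω₂ Γ (pair a b) =
      pair (Ω₁ a + Γ b) (ContinuousLinearMap.adjoint Γ a + Ω₂ b) := rfl

lemma pair_mem_sub1 (x : H₁) : (pair x 0 : WithLp 2 (H₁ × H₂)) ∈ sub1 := by unfold sub1; exact ⟨x, rfl⟩

lemma pair_mem_sub2 (y : H₂) : (pair 0 y : WithLp 2 (H₁ × H₂)) ∈ sub2 := by unfold sub2; exact ⟨y, rfl⟩

lemma pair_mem_sub1_orth (b : H₂) : (pair 0 b : WithLp 2 (H₁ × H₂)) ∈ sub1ᗮ := by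
  rw [Submodule.mem_orthogonal]
  intro u hu; unfold sub1 at hu; obtain ⟨x, rfl⟩ := hu
  show (inner ℂ x (0 : H₁) + inner ℂ (0 : H₂) b : ℂ) = 0
  simp

lemma pair_mem_sub2_orth (a : H₁) : (pair a 0 : WithLp 2 (H₁ × H₂)) ∈ sub2ᗮ := by
  rw [Submodule.mem_orthogonal]
  intro u hu; unfold sub2 at hu; obtain ⟨y, rfl⟩ := hu
  show (inner ℂ (0 : H₁) a + inner ℂ y (0 : H₂) : ℂ) = 0
  simp

lemma fst_eq_zero_of_mem_sub1_orth {p : WithLp 2 (H₁ × H₂)} (hp : p ∈ sub1ᗮ) :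
    p.fst = 0 := by
  rw [Submodule.mem_orthogonal] at hp
  have := hp (inl' p.fst) (by unfold sub1; exact ⟨p.fst, rfl⟩)
  have h2 : (inner ℂ p.fst p.fst + inner ℂ (0 : H₂) p.snd : ℂ) = 0 := this
  simpa [inner_self_eq_zero] using h2

lemma snd_eq_zero_of_mem_sub2_orth {p : WithLp 2 (H₁ × H₂)} (hp : p ∈ sub2ᗮ) :
    p.snd = 0 := by
  rw [Submodule.mem_orthogonal] at hp
  have := hp (inr' p.snd) (by unfold sub2; exact ⟨p.snd, rfl⟩)
  have h2 : (inner ℂ (0 : H₁) p.fst + inner ℂ p.snd p.snd : ℂ) = 0 := this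
  simpa [inner_self_eq_zero] using h2

end Aux

set_option maxHeartbeats 1000000 in
/-- `H₁c ⊕ H₂c` is invariant under `Ω` and contains the range of the
off-diagonal coupling operator `Γ̊ = [[0, Γ], [Γ†, 0]]`. -/
theorem coupled_invariant_contains_coupling
    (Ω₁ : H₁ →L[ℂ] H₁) (Ω₂ : H₂ →L[ℂ] H₂) (Γ : H₂ →L[ℂ] H₁)
    (hΩ₁ : IsSelfAdjoint Ω₁) (hΩ₂ : IsSelfAdjoint Ω₂)
    (Ω Γ' : WithLp 2 (H₁ × H₂) →L[ℂ] WithLp 2 (H₁ × H₂)) (hΩ : Ω = blockOp Ω₁ Ω₂ Γ)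
    (hΓ' : Γ' = blockOp 0 0 Γ)
    (H2c H1c : Submodule ℂ (WithLp 2 (H₁ × H₂)))
    (hH2c : H2c = orbit Ω (sub1 : Submodule ℂ (WithLp 2 (H₁ × H₂))) ⊓
      (sub1 : Submodule ℂ (WithLp 2 (H₁ × H₂)))ᗮ)
    (hH1c : H1c = orbit Ω (sub2 : Submodule ℂ (WithLp 2 (H₁ × H₂))) ⊓
      (sub2 : Submodule ℂ (WithLp 2 (H₁ × H₂)))ᗮ) :
    (∀ x ∈ H1c ⊔ H2c, Ω x ∈ H1c ⊔ H2c) ∧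
    Set.range Γ' ⊆ (H1c ⊔ H2c : Submodule ℂ (WithLp 2 (H₁ × H₂))) := by
  subst hΩ hΓ' hH2c hH1c
  set Ω := blockOp Ω₁ Ω₂ Γ with hΩdef
  -- membership of the coupling pieces
  have hA : ∀ y : H₂, (pair (Γ y) 0 : WithLp 2 (H₁ × H₂)) ∈
      orbit Ω (sub2 : Submodule ℂ (WithLp 2 (H₁ × H₂))) ⊓ sub2ᗮ := by
    intro y
    refine Submodule.mem_inf.2 ⟨?_, pair_mem_sub2_orth _⟩
    have h1 : (pair (0 : H₁) y : WithLp 2 (H₁ × H₂)) ∈ orbit Ω (sub2 : Submodule ℂ (WithLp 2 (H₁ × H₂))) :=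
      mem_orbit_of_mem _ _ (pair_mem_sub2 y)
    have h2 := orbit_mapsTo' Ω _ h1
    rw [hΩdef, blockOp_pair] at h2
    have h3 : (pair (0 : H₁) (ContinuousLinearMap.adjoint Γ 0 + Ω₂ y) :
        WithLp 2 (H₁ × H₂)) ∈ orbit Ω (sub2 : Submodule ℂ (WithLp 2 (H₁ × H₂))) := mem_orbit_of_mem _ _ (pair_mem_sub2 _)
    have h4 := sub_mem h2 h3
    rw [pair_sub] at h4
    simpa using h4
  have hB : ∀ x : H₁, (pair 0 (ContinuousLinearMap.adjoint Γ x) : WithLp 2 (H₁ × H₂)) ∈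
      orbit Ω (sub1 : Submodule ℂ (WithLp 2 (H₁ × H₂))) ⊓ sub1ᗮ := by
    intro x
    refine Submodule.mem_inf.2 ⟨?_, pair_mem_sub1_orth _⟩
    have h1 : (pair x (0 : H₂) : WithLp 2 (H₁ × H₂)) ∈ orbit Ω (sub1 : Submodule ℂ (WithLp 2 (H₁ × H₂))) :=
      mem_orbit_of_mem _ _ (pair_mem_sub1 x)
    have h2 := orbit_mapsTo' Ω _ h1
    rw [hΩdef, blockOp_pair] at h2
    have h3 : (pair (Ω₁ x + Γ 0) (0 : H₂) : WithLp 2 (H₁ × H₂)) ∈ orbit Ω (sub1 : Submodule ℂ (WithLp 2 (H₁ × H₂))) :=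
      mem_orbit_of_mem _ _ (pair_mem_sub1 _)
    have h4 := sub_mem h2 h3
    rw [pair_sub] at h4
    simpa using h4
  constructor
  · -- invariance
    intro x hx
    rcases Submodule.mem_sup.1 hx with ⟨y, hy, z, hz, rfl⟩
    rw [map_add]
    refine add_mem ?_ ?_
    · -- y ∈ H1c, show Ω y ∈ sup
      have hy1 := (Submodule.mem_inf.1 hy).1
      have hy2 := snd_eq_zero_of_mem_sub2_orth (Submodule.mem_inf.1 hy).2
      have hyo := orbit_mapsTo' Ω _ hy1
      have hval : Ω y = pair (Ω₁ y.fst) (ContinuousLinearMap.adjoint Γ y.fst) := by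
        conv_lhs => rw [← pair_eq_self y]
        rw [hΩdef, blockOp_pair, hy2]
        simp
      have hfirst : (pair (Ω₁ y.fst) 0 : WithLp 2 (H₁ × H₂)) ∈
          orbit Ω (sub2 : Submodule ℂ (WithLp 2 (H₁ × H₂))) ⊓ sub2ᗮ := by
        refine Submodule.mem_inf.2 ⟨?_, pair_mem_sub2_orth _⟩
        have h3 : (pair (0 : H₁) (ContinuousLinearMap.adjoint Γ y.fst) :
            WithLp 2 (H₁ × H₂)) ∈ orbit Ω (sub2 : Submodule ℂ (WithLp 2 (H₁ × H₂))) := mem_orbit_of_mem _ _ (pair_mem_sub2 _)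
        have h4 := sub_mem hyo h3
        rw [hval, pair_sub] at h4
        simpa using h4
      have hsum : Ω y = pair (Ω₁ y.fst) 0 + pair 0 (ContinuousLinearMap.adjoint Γ y.fst) := by
        rw [hval, pair_add, add_zero, zero_add]
      rw [hsum]
      exact add_mem (Submodule.mem_sup_left hfirst) (Submodule.mem_sup_right (hB y.fst))
    · -- z ∈ H2c, show Ω z ∈ sup
      have hz1 := (Submodule.mem_inf.1 hz).1
      have hz2 := fst_eq_zero_of_mem_sub1_orth (Submodule.mem_inf.1 hz).2
      have hzo := orbit_mapsTo' Ω _ hz1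
      have hval : Ω z = pair (Γ z.snd) (Ω₂ z.snd) := by
        conv_lhs => rw [← pair_eq_self z]
        rw [hΩdef, blockOp_pair, hz2]
        simp
      have hsecond : (pair (0 : H₁) (Ω₂ z.snd) : WithLp 2 (H₁ × H₂)) ∈
          orbit Ω (sub1 : Submodule ℂ (WithLp 2 (H₁ × H₂))) ⊓ sub1ᗮ := by
        refine Submodule.mem_inf.2 ⟨?_, pair_mem_sub1_orth _⟩
        have h3 : (pair (Γ z.snd) (0 : H₂) : WithLp 2 (H₁ × H₂)) ∈ orbit Ω (sub1 : Submodule ℂ (WithLp 2 (H₁ × H₂))) :=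
          mem_orbit_of_mem _ _ (pair_mem_sub1 _)
        have h4 := sub_mem hzo h3
        rw [hval, pair_sub] at h4
        simpa using h4
      have hsum : Ω z = pair (Γ z.snd) 0 + pair 0 (Ω₂ z.snd) := by
        rw [hval, pair_add, add_zero, zero_add]
      rw [hsum]
      exact add_mem (Submodule.mem_sup_left (hA z.snd)) (Submodule.mem_sup_right hsecond)
  · -- range of the coupling operator
    rintro _ ⟨p, rfl⟩
    have hval : blockOp 0 0 Γ p =
        pair (Γ p.snd) 0 + pair 0 (ContinuousLinearMap.adjoint Γ p.fst) := by
      conv_lhs => rw [← pair_eq_self p]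
      rw [blockOp_pair, pair_add]
      simp
    rw [SetLike.mem_coe, hval]
    exact add_mem (Submodule.mem_sup_left (hA p.snd)) (Submodule.mem_sup_right (hB p.fst))
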